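/- arXiv:2301.08672 — 2 statements merged into one kernel-verified Lean document; each statement's English description precedes it below -/
import Mathlib

section
/- Let L be a regular-epi localization functor on XMod. Then L is conditionally flat if and only if for every L-flat short exact sequence 1 → N →(κ) T →(α) Q → 1 in which the kernel N is an L-local crossed module, the pullback sequence along any morphism Q' → Q is L-flat. -/
set_option linter.unusedVariables false

/-- A crossed module of groups `(M, G, d)` with `G` acting on `M`. -/
structure XMod : Type 1 where
  M : Type
  G : Type
  [grpM : Group M]
  [grpG : Group G]
  act : G →* MulAut M
  d : M →* G
  act_d : ∀ (b : G) (t : M), d (act b t) = b * d t * b⁻¹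
  peiffer : ∀ (t s : M), act (d t) s = t * s * t⁻¹

attribute [instance] XMod.grpM XMod.grpG

/-- A morphism of crossed modules. -/
structure XModHom (N T : XMod) where
  f1 : N.M →* T.M
  f2 : N.G →* T.G
  comm_d : ∀ n, T.d (f1 n) = f2 (N.d n)
  equiv : ∀ (b : N.G) (n : N.M), f1 (N.act b n) = T.act (f2 b) (f1 n)

namespace XModHom

theorem ext {N T : XMod} {f g : XModHom N T} (h1 : f.f1 = g.f1) (h2 : f.f2 = g.f2) :
    f = g := by
  cases f; cases g; cases h1; cases h2; rfl

/-- The identity morphism. -/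
def id (T : XMod) : XModHom T T :=
  ⟨MonoidHom.id _, MonoidHom.id _, fun _ => rfl, fun _ _ => rfl⟩

/-- Composition of morphisms of crossed modules. -/
def comp {A B C : XMod} (g : XModHom B C) (f : XModHom A B) : XModHom A C where
  f1 := g.f1.comp f.f1
  f2 := g.f2.comp f.f2
  comm_d := by intro n; simp [MonoidHom.comp_apply, g.comm_d, f.comm_d]
  equiv := by intro b n; simp [MonoidHom.comp_apply, f.equiv, g.equiv]

/-- The trivial morphism of crossed modules. -/
def triv (A B : XMod) : XModHom A B where
  f1 := 1
  f2 := 1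
  comm_d := by intro n; simp
  equiv := by intro b n; simp

/-- A morphism of crossed modules is an isomorphism if it has a two-sided inverse. -/
def IsIso {A B : XMod} (f : XModHom A B) : Prop :=
  ∃ g : XModHom B A, comp g f = id A ∧ comp f g = id B

/-- Regular epimorphisms of crossed modules are exactly the componentwise
surjective morphisms. -/
def RegEpi {A B : XMod} (f : XModHom A B) : Prop :=
  Function.Surjective f.f1 ∧ Function.Surjective f.f2

/-- `κ` is a kernel of `α` (in the categorical sense). -/
def IsKernelOf {N T Q : XMod} (κ : XModHom N T) (α : XModHom T Q) : Prop :=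
  comp α κ = triv N Q ∧
    ∀ (X : XMod) (u : XModHom X T), comp α u = triv X Q →
      ∃! v : XModHom X N, comp κ v = u

end XModHom

/-- `1 → N → T → Q → 1` is a short exact sequence of crossed modules. -/
def ShortExact {N T Q : XMod} (κ : XModHom N T) (α : XModHom T Q) : Prop :=
  XModHom.IsKernelOf κ α ∧ XModHom.RegEpi α
/-- A localization functor (coaugmented idempotent functor) on `XMod`. -/
structure LocalizationFunctor where
  obj : XMod → XMod
  map : ∀ {A B : XMod}, XModHom A B → XModHom (obj A) (obj B)
  map_id : ∀ A : XMod, map (XModHom.id A) = XModHom.id (obj A)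
  map_comp : ∀ {A B C : XMod} (f : XModHom A B) (g : XModHom B C),
    map (XModHom.comp g f) = XModHom.comp (map g) (map f)
  ell : ∀ A : XMod, XModHom A (obj A)
  natural : ∀ {A B : XMod} (f : XModHom A B),
    XModHom.comp (ell B) f = XModHom.comp (map f) (ell A)
  iso_ell_obj : ∀ A : XMod, XModHom.IsIso (ell (obj A))
  iso_map_ell : ∀ A : XMod, XModHom.IsIso (map (ell A))

namespace LocalizationFunctor

/-- A crossed module is `L`-local if its coaugmentation is an isomorphism. -/
def IsLocal (L : LocalizationFunctor) (X : XMod) : Prop :=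
  XModHom.IsIso (L.ell X)

/-- `L` is a regular-epi localization if every coaugmentation morphism is a
regular epimorphism. -/
def RegEpiLoc (L : LocalizationFunctor) : Prop :=
  ∀ X : XMod, XModHom.RegEpi (L.ell X)

/-- A short exact sequence is `L`-flat if applying `L` yields a short exact sequence. -/
def LFlat (L : LocalizationFunctor) {N T Q : XMod} (κ : XModHom N T) (α : XModHom T Q) : Prop :=
  ShortExact (L.map κ) (L.map α)

end LocalizationFunctor
section Pullback

variable {T Q Q' : XMod} (α : XModHom T Q) (g : XModHom Q' Q)

/-- Level-1 part of the pullback `T ×_Q Q'`, computed componentwise. -/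
def pbM : Subgroup (T.M × Q'.M) where
  carrier := {p | α.f1 p.1 = g.f1 p.2}
  one_mem' := by simp
  mul_mem' := by
    intro a b ha hb
    simp only [Set.mem_setOf_eq, Prod.fst_mul, Prod.snd_mul, map_mul] at *
    rw [ha, hb]
  inv_mem' := by
    intro a ha
    simp only [Set.mem_setOf_eq, Prod.fst_inv, Prod.snd_inv, map_inv] at *
    rw [ha]

/-- Level-2 part of the pullback `T ×_Q Q'`, computed componentwise. -/
def pbG : Subgroup (T.G × Q'.G) where
  carrier := {p | α.f2 p.1 = g.f2 p.2}
  one_mem' := by simp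
  mul_mem' := by
    intro a b ha hb
    simp only [Set.mem_setOf_eq, Prod.fst_mul, Prod.snd_mul, map_mul] at *
    rw [ha, hb]
  inv_mem' := by
    intro a ha
    simp only [Set.mem_setOf_eq, Prod.fst_inv, Prod.snd_inv, map_inv] at *
    rw [ha]

theorem mem_pbM_iff (p : T.M × Q'.M) : p ∈ pbM α g ↔ α.f1 p.1 = g.f1 p.2 := Iff.rfl

theorem mem_pbG_iff (p : T.G × Q'.G) : p ∈ pbG α g ↔ α.f2 p.1 = g.f2 p.2 := Iff.rfl

theorem pb_act_mem {b : T.G × Q'.G} (hb : b ∈ pbG α g) {p : T.M × Q'.M}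
    (hp : p ∈ pbM α g) : (T.act b.1 p.1, Q'.act b.2 p.2) ∈ pbM α g := by
  have hb' : α.f2 b.1 = g.f2 b.2 := hb
  have hp' : α.f1 p.1 = g.f1 p.2 := hp
  show α.f1 (T.act b.1 p.1) = g.f1 (Q'.act b.2 p.2)
  rw [α.equiv, g.equiv, hb', hp']

theorem XMod.act_inv_act (X : XMod) (b : X.G) (t : X.M) :
    X.act b⁻¹ (X.act b t) = t := by
  rw [← MulAut.mul_apply, ← map_mul, inv_mul_cancel, map_one, MulAut.one_apply]

theorem XMod.act_act_inv (X : XMod) (b : X.G) (t : X.M) :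
    X.act b (X.act b⁻¹ t) = t := by
  rw [← MulAut.mul_apply, ← map_mul, mul_inv_cancel, map_one, MulAut.one_apply]

/-- The action of an element of the pullback on the level-1 part, as a group
automorphism. -/
def pbActEquiv (b : ↥(pbG α g)) : ↥(pbM α g) ≃* ↥(pbM α g) where
  toFun p := ⟨(T.act b.1.1 p.1.1, Q'.act b.1.2 p.1.2), pb_act_mem α g b.2 p.2⟩
  invFun p := ⟨(T.act b.1.1⁻¹ p.1.1, Q'.act b.1.2⁻¹ p.1.2),
    pb_act_mem α g ((pbG α g).inv_mem b.2) p.2⟩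
  left_inv p := by
    apply Subtype.ext
    exact Prod.ext (T.act_inv_act _ _) (Q'.act_inv_act _ _)
  right_inv p := by
    apply Subtype.ext
    exact Prod.ext (T.act_act_inv _ _) (Q'.act_act_inv _ _)
  map_mul' p q := by
    apply Subtype.ext
    exact Prod.ext (map_mul _ _ _) (map_mul _ _ _)

/-- The pullback `T ×_Q Q'` of `α : T → Q` along `g : Q' → Q`, computed
componentwise. -/
def pbXMod : XMod where
  M := ↥(pbM α g)
  G := ↥(pbG α g)
  act :=
    { toFun := pbActEquiv α g
      map_one' := by
        apply MulEquiv.ext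
        intro p
        apply Subtype.ext
        apply Prod.ext
        · show T.act (1 : ↥(pbG α g)).1.1 p.1.1 = p.1.1
          simp
        · show Q'.act (1 : ↥(pbG α g)).1.2 p.1.2 = p.1.2
          simp
      map_mul' := by
        intro b c
        apply MulEquiv.ext
        intro p
        apply Subtype.ext
        apply Prod.ext
        · show T.act (b * c).1.1 p.1.1 = T.act b.1.1 (T.act c.1.1 p.1.1)
          simp [map_mul]
        · show Q'.act (b * c).1.2 p.1.2 = Q'.act b.1.2 (Q'.act c.1.2 p.1.2)
          simp [map_mul] }
  d :=
    { toFun := fun p => ⟨(T.d p.1.1, Q'.d p.1.2), by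
        have hp : α.f1 p.1.1 = g.f1 p.1.2 := p.2
        show α.f2 (T.d p.1.1) = g.f2 (Q'.d p.1.2)
        rw [← α.comm_d, ← g.comm_d, hp]⟩
      map_one' := by
        apply Subtype.ext
        apply Prod.ext <;> simp
      map_mul' := by
        intro p q
        apply Subtype.ext
        apply Prod.ext <;> simp }
  act_d := by
    intro b p
    apply Subtype.ext
    apply Prod.ext
    · exact T.act_d _ _
    · exact Q'.act_d _ _
  peiffer := by
    intro p q
    apply Subtype.ext
    apply Prod.ext
    · exact T.peiffer _ _
    · exact Q'.peiffer _ _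

/-- First projection of the pullback. -/
def pbFst : XModHom (pbXMod α g) T where
  f1 := (MonoidHom.fst T.M Q'.M).comp (pbM α g).subtype
  f2 := (MonoidHom.fst T.G Q'.G).comp (pbG α g).subtype
  comm_d := fun _ => rfl
  equiv := fun _ _ => rfl

/-- Second projection of the pullback. -/
def pbSnd : XModHom (pbXMod α g) Q' where
  f1 := (MonoidHom.snd T.M Q'.M).comp (pbM α g).subtype
  f2 := (MonoidHom.snd T.G Q'.G).comp (pbG α g).subtype
  comm_d := fun _ => rfl
  equiv := fun _ _ => rfl

end Pullback
section PullbackMaps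

variable {N T Q Q' : XMod}

/-- The induced morphism from the kernel `N` into the pullback `T ×_Q Q'`. -/
def pbIn (κ : XModHom N T) (α : XModHom T Q) (g : XModHom Q' Q)
    (h : XModHom.comp α κ = XModHom.triv N Q) : XModHom N (pbXMod α g) where
  f1 :=
    { toFun := fun n => ⟨(κ.f1 n, 1), by
        show α.f1 (κ.f1 n) = g.f1 1
        have := congrArg XModHom.f1 h
        have h' : α.f1 (κ.f1 n) = 1 := DFunLike.congr_fun this n
        rw [h', map_one]⟩
      map_one' := by
        apply Subtype.ext
        apply Prod.ext <;> first | rfl | exact map_one _ | simp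
      map_mul' := by
        intro a b
        apply Subtype.ext
        show (κ.f1 (a * b), (1 : Q'.M)) = (κ.f1 a, (1 : Q'.M)) * (κ.f1 b, (1 : Q'.M))
        simp [Prod.ext_iff, map_mul] }
  f2 :=
    { toFun := fun n => ⟨(κ.f2 n, 1), by
        show α.f2 (κ.f2 n) = g.f2 1
        have := congrArg XModHom.f2 h
        have h' : α.f2 (κ.f2 n) = 1 := DFunLike.congr_fun this n
        rw [h', map_one]⟩
      map_one' := by
        apply Subtype.ext
        apply Prod.ext <;> first | rfl | exact map_one _ | simp
      map_mul' := by
        intro a b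
        apply Subtype.ext
        show (κ.f2 (a * b), (1 : Q'.G)) = (κ.f2 a, (1 : Q'.G)) * (κ.f2 b, (1 : Q'.G))
        simp [Prod.ext_iff, map_mul] }
  comm_d := by
    intro n
    apply Subtype.ext
    apply Prod.ext
    · exact κ.comm_d n
    · show Q'.d (1 : Q'.M) = 1
      simp
  equiv := by
    intro b n
    apply Subtype.ext
    apply Prod.ext
    · exact κ.equiv b n
    · show (1 : Q'.M) = Q'.act 1 1
      simp

/-- The induced morphism into the pullback `T ×_Q Q'` from an object mapping
trivially to `Q` through the second leg. -/
def pbInR (α : XModHom T Q) (g : XModHom Q' Q) {X : XMod} (u : XModHom X Q')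
    (h : XModHom.comp g u = XModHom.triv X Q) : XModHom X (pbXMod α g) where
  f1 :=
    { toFun := fun n => ⟨(1, u.f1 n), by
        show α.f1 1 = g.f1 (u.f1 n)
        have := congrArg XModHom.f1 h
        have h' : g.f1 (u.f1 n) = 1 := DFunLike.congr_fun this n
        rw [h', map_one]⟩
      map_one' := by
        apply Subtype.ext
        apply Prod.ext <;> first | rfl | exact map_one _ | simp
      map_mul' := by
        intro a b
        apply Subtype.ext
        show ((1 : T.M), u.f1 (a * b)) = ((1 : T.M), u.f1 a) * ((1 : T.M), u.f1 b)
        simp [Prod.ext_iff, map_mul] }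
  f2 :=
    { toFun := fun n => ⟨(1, u.f2 n), by
        show α.f2 1 = g.f2 (u.f2 n)
        have := congrArg XModHom.f2 h
        have h' : g.f2 (u.f2 n) = 1 := DFunLike.congr_fun this n
        rw [h', map_one]⟩
      map_one' := by
        apply Subtype.ext
        apply Prod.ext <;> first | rfl | exact map_one _ | simp
      map_mul' := by
        intro a b
        apply Subtype.ext
        show ((1 : T.G), u.f2 (a * b)) = ((1 : T.G), u.f2 a) * ((1 : T.G), u.f2 b)
        simp [Prod.ext_iff, map_mul] }
  comm_d := by
    intro n
    apply Subtype.ext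
    apply Prod.ext
    · show T.d (1 : T.M) = 1
      simp
    · exact u.comm_d n
  equiv := by
    intro b n
    apply Subtype.ext
    apply Prod.ext
    · show (1 : T.M) = T.act 1 1
      simp
    · exact u.equiv b n

/-- The morphism of pullbacks `T ×_Q Q' → E ×_Q Q'` induced by `f : T → E`
with `p ∘ f = α`. -/
def pbMapL {E : XMod} (α : XModHom T Q) (p : XModHom E Q) (g : XModHom Q' Q)
    (f : XModHom T E) (hpf : XModHom.comp p f = α) :
    XModHom (pbXMod α g) (pbXMod p g) where
  f1 :=
    { toFun := fun w => ⟨(f.f1 w.1.1, w.1.2), by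
        show p.f1 (f.f1 w.1.1) = g.f1 w.1.2
        have h' : p.f1 (f.f1 w.1.1) = α.f1 w.1.1 :=
          DFunLike.congr_fun (congrArg XModHom.f1 hpf) w.1.1
        rw [h']
        exact w.2⟩
      map_one' := by
        apply Subtype.ext
        apply Prod.ext <;> first | rfl | exact map_one _ | simp
      map_mul' := by
        intro a b
        apply Subtype.ext
        apply Prod.ext
        · exact map_mul f.f1 a.1.1 b.1.1
        · rfl }
  f2 :=
    { toFun := fun w => ⟨(f.f2 w.1.1, w.1.2), by
        show p.f2 (f.f2 w.1.1) = g.f2 w.1.2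
        have h' : p.f2 (f.f2 w.1.1) = α.f2 w.1.1 :=
          DFunLike.congr_fun (congrArg XModHom.f2 hpf) w.1.1
        rw [h']
        exact w.2⟩
      map_one' := by
        apply Subtype.ext
        apply Prod.ext <;> first | rfl | exact map_one _ | simp
      map_mul' := by
        intro a b
        apply Subtype.ext
        apply Prod.ext
        · exact map_mul f.f2 a.1.1 b.1.1
        · rfl }
  comm_d := by
    intro w
    apply Subtype.ext
    apply Prod.ext
    · exact f.comm_d _
    · rfl
  equiv := by
    intro b w
    apply Subtype.ext
    apply Prod.ext
    · exact f.equiv _ _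
    · rfl

end PullbackMaps

/-- A commuting square is a pullback square (categorical definition). -/
def IsPullbackSquare {P X Y Z : XMod} (p1 : XModHom P X) (p2 : XModHom P Y)
    (f : XModHom X Z) (h : XModHom Y Z) : Prop :=
  XModHom.comp f p1 = XModHom.comp h p2 ∧
    ∀ (W : XMod) (u : XModHom W X) (v : XModHom W Y),
      XModHom.comp f u = XModHom.comp h v →
        ∃! w : XModHom W P, XModHom.comp p1 w = u ∧ XModHom.comp p2 w = v

namespace LocalizationFunctor

/-- `L` is admissible for the class of regular epimorphisms: applying `L` to the
pullback of a regular epimorphism `α : LT → LQ` along the coaugmentation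
`ℓ^Q : Q → LQ` yields again a pullback square. -/
def Admissible (L : LocalizationFunctor) : Prop :=
  ∀ (T Q : XMod) (α : XModHom (L.obj T) (L.obj Q)), XModHom.RegEpi α →
    IsPullbackSquare (L.map (pbFst α (L.ell Q))) (L.map (pbSnd α (L.ell Q)))
      (L.map α) (L.map (L.ell Q))

/-- `L` is conditionally flat: the pullback of any `L`-flat short exact sequence
along any morphism is again `L`-flat. -/
def ConditionallyFlat (L : LocalizationFunctor) : Prop :=
  ∀ (N T Q : XMod) (κ : XModHom N T) (α : XModHom T Q) (hse : ShortExact κ α),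
    L.LFlat κ α →
      ∀ (Q' : XMod) (g : XModHom Q' Q),
        L.LFlat (pbIn κ α g hse.1.1) (pbSnd α g)

/-- A short exact sequence `1 → N → T → Q → 1` admits a fiberwise localization:
there is a short exact sequence `1 → LN → E → Q → 1` together with an
`L`-equivalence `T → E` compatible with the coaugmentation of `N`. -/
def AdmitsFiberwise (L : LocalizationFunctor) {N T Q : XMod} (κ : XModHom N T)
    (α : XModHom T Q) : Prop :=
  ∃ (E : XMod) (j : XModHom (L.obj N) E) (p : XModHom E Q) (e : XModHom T E),
    ShortExact j p ∧ XModHom.IsIso (L.map e) ∧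
      XModHom.comp e κ = XModHom.comp j (L.ell N) ∧ XModHom.comp p e = α

end LocalizationFunctor
section Kernel

variable {N T : XMod} (f : XModHom N T)

theorem ker_act_mem {b : N.G} (hb : b ∈ f.f2.ker) {n : N.M} (hn : n ∈ f.f1.ker) :
    N.act b n ∈ f.f1.ker := by
  have hb' : f.f2 b = 1 := hb
  have hn' : f.f1 n = 1 := hn
  show f.f1 (N.act b n) = 1
  rw [f.equiv, hb', hn', map_one]

/-- The automorphism of `ker f.f1` induced by an element of `ker f.f2`. -/
def kerActEquiv (b : ↥f.f2.ker) : ↥f.f1.ker ≃* ↥f.f1.ker where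
  toFun n := ⟨N.act b.1 n.1, ker_act_mem f b.2 n.2⟩
  invFun n := ⟨N.act b.1⁻¹ n.1, ker_act_mem f (f.f2.ker.inv_mem b.2) n.2⟩
  left_inv n := Subtype.ext (N.act_inv_act _ _)
  right_inv n := Subtype.ext (N.act_act_inv _ _)
  map_mul' n m := Subtype.ext (map_mul _ _ _)

/-- The kernel of a morphism of crossed modules, computed componentwise. -/
def kerXMod : XMod where
  M := ↥f.f1.ker
  G := ↥f.f2.ker
  act :=
    { toFun := kerActEquiv f
      map_one' := by
        apply MulEquiv.ext
        intro n
        apply Subtype.ext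
        show N.act (1 : ↥f.f2.ker).1 n.1 = n.1
        simp
      map_mul' := by
        intro b c
        apply MulEquiv.ext
        intro n
        apply Subtype.ext
        show N.act (b * c).1 n.1 = N.act b.1 (N.act c.1 n.1)
        simp [map_mul] }
  d :=
    { toFun := fun n => ⟨N.d n.1, by
        have hn : f.f1 n.1 = 1 := n.2
        show f.f2 (N.d n.1) = 1
        rw [← f.comm_d, hn, map_one]⟩
      map_one' := by
        apply Subtype.ext
        simp
      map_mul' := by
        intro a b
        apply Subtype.ext
        show N.d (a * b).1 = N.d a.1 * N.d b.1
        simp }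
  act_d := by
    intro b n
    apply Subtype.ext
    exact N.act_d _ _
  peiffer := by
    intro n m
    apply Subtype.ext
    exact N.peiffer _ _

/-- The inclusion of the kernel. -/
def kerIncl : XModHom (kerXMod f) N where
  f1 := f.f1.ker.subtype
  f2 := f.f2.ker.subtype
  comm_d := fun _ => rfl
  equiv := fun _ _ => rfl

end Kernel

/-- A crossed module is trivial if both underlying groups are trivial. -/
def XMod.IsTrivial (X : XMod) : Prop :=
  (∀ m : X.M, m = 1) ∧ ∀ b : X.G, b = 1

/-- `X` is `A`-null if the only morphism of crossed modules `A → X` is the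
trivial one. -/
def ANull (A X : XMod) : Prop :=
  ∀ φ : XModHom A X, φ = XModHom.triv A X

/-- `X` is `f`-local if precomposition with `f` is a bijection on morphisms
into `X`. -/
def FLocal {B C : XMod} (f : XModHom B C) (X : XMod) : Prop :=
  Function.Bijective fun φ : XModHom C X => XModHom.comp φ f

/-- The subgroup `[N₂, N₁]` of `N₁` generated by the elements `ᵇt·t⁻¹`. -/
def actCommutator (N : XMod) : Subgroup N.M :=
  Subgroup.closure {x | ∃ (b : N.G) (t : N.M), x = N.act b t * t⁻¹}

section NormalClosure

variable {A W : XMod} (φ : XModHom A W)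

/-- The level-2 part of the normal closure of the image of `φ`:
the normal closure of `φ₂(A₂)` in `W₂`. -/
def ncl2 : Subgroup W.G :=
  Subgroup.normalClosure (Set.range φ.f2)

/-- The level-1 part of the normal closure of the image of `φ`:
the subgroup `φ₁(A₁)^{W₂}·[φ₂(A₂)^{W₂}, W₁]` of `W₁`. -/
def ncl1 : Subgroup W.M :=
  Subgroup.closure
    ({x | ∃ (b : W.G) (m : A.M), x = W.act b (φ.f1 m)} ∪
      {x | ∃ s ∈ ncl2 φ, ∃ w : W.M, x = W.act s w * w⁻¹})

end NormalClosure


section Statement5Aux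

namespace XModHom

theorem congr_f1 {A B : XMod} {f g : XModHom A B} (h : f = g) (x : A.M) :
    f.f1 x = g.f1 x := by rw [h]

theorem congr_f2 {A B : XMod} {f g : XModHom A B} (h : f = g) (x : A.G) :
    f.f2 x = g.f2 x := by rw [h]

theorem comp_assoc {A B C D : XMod} (h : XModHom C D) (g : XModHom B C) (f : XModHom A B) :
    comp (comp h g) f = comp h (comp g f) :=
  ext (MonoidHom.ext fun _ => rfl) (MonoidHom.ext fun _ => rfl)

theorem id_comp {A B : XMod} (f : XModHom A B) : comp (id B) f = f :=
  ext (MonoidHom.ext fun _ => rfl) (MonoidHom.ext fun _ => rfl)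

theorem comp_id {A B : XMod} (f : XModHom A B) : comp f (id A) = f :=
  ext (MonoidHom.ext fun _ => rfl) (MonoidHom.ext fun _ => rfl)

theorem triv_comp {A B C : XMod} (f : XModHom A B) : comp (triv B C) f = triv A C :=
  ext (MonoidHom.ext fun _ => rfl) (MonoidHom.ext fun _ => rfl)

theorem comp_triv {A B C : XMod} (f : XModHom B C) : comp f (triv A B) = triv A C :=
  ext (MonoidHom.ext fun x => map_one f.f1) (MonoidHom.ext fun x => map_one f.f2)

theorem IsIso.surj1 {A B : XMod} {f : XModHom A B} (h : IsIso f) :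
    Function.Surjective f.f1 := by
  obtain ⟨g, _, h2⟩ := h
  exact fun y => ⟨g.f1 y, congr_f1 h2 y⟩

theorem IsIso.surj2 {A B : XMod} {f : XModHom A B} (h : IsIso f) :
    Function.Surjective f.f2 := by
  obtain ⟨g, _, h2⟩ := h
  exact fun y => ⟨g.f2 y, congr_f2 h2 y⟩

/-- Componentwise surjective morphisms are epimorphisms. -/
theorem cancel_of_surj {A B C : XMod} {e : XModHom A B}
    (h1 : Function.Surjective e.f1) (h2 : Function.Surjective e.f2)
    {u v : XModHom B C} (h : comp u e = comp v e) : u = v := by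
  refine ext (MonoidHom.ext fun x => ?_) (MonoidHom.ext fun x => ?_)
  · obtain ⟨a, rfl⟩ := h1 x; exact congr_f1 h a
  · obtain ⟨a, rfl⟩ := h2 x; exact congr_f2 h a

theorem cancel_iso_left {A B C : XMod} {q : XModHom B C} (hq : IsIso q)
    {u v : XModHom A B} (h : comp q u = comp q v) : u = v := by
  obtain ⟨p, hp1, hp2⟩ := hq
  calc u = comp (comp p q) u := by rw [hp1, id_comp]
    _ = comp p (comp q u) := comp_assoc _ _ _
    _ = comp p (comp q v) := by rw [h]
    _ = comp (comp p q) v := (comp_assoc _ _ _).symm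
    _ = v := by rw [hp1, id_comp]

theorem iso_shuffle {A A' B B' : XMod} {e : XModHom B B'} {m : XModHom A A'}
    {f : XModHom A B} {f' : XModHom A' B'}
    {einv : XModHom B' B} {minv : XModHom A' A}
    (he : comp einv e = id B) (hm : comp m minv = id A')
    (h : comp e f = comp f' m) : comp einv f' = comp f minv := by
  calc comp einv f' = comp einv (comp f' (comp m minv)) := by rw [hm, comp_id]
    _ = comp einv (comp (comp f' m) minv) := by rw [comp_assoc f' m minv]
    _ = comp einv (comp (comp e f) minv) := by rw [h]
    _ = comp einv (comp e (comp f minv)) := by rw [comp_assoc e f minv]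
    _ = comp (comp einv e) (comp f minv) := by rw [comp_assoc einv e (comp f minv)]
    _ = comp f minv := by rw [he, id_comp]

end XModHom

open XModHom

/-- The canonical inclusion of the kernel is a kernel in the categorical sense. -/
theorem kerIncl_isKernelOf {T Q : XMod} (α : XModHom T Q) :
    IsKernelOf (kerIncl α) α := by
  constructor
  · exact ext (MonoidHom.ext fun x => x.2) (MonoidHom.ext fun x => x.2)
  · intro X u hu
    refine ⟨{ f1 := { toFun := fun x => ⟨u.f1 x, congr_f1 hu x⟩
                      map_one' := Subtype.ext (map_one u.f1)
                      map_mul' := fun a b => Subtype.ext (map_mul u.f1 a b) }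
              f2 := { toFun := fun x => ⟨u.f2 x, congr_f2 hu x⟩
                      map_one' := Subtype.ext (map_one u.f2)
                      map_mul' := fun a b => Subtype.ext (map_mul u.f2 a b) }
              comm_d := fun n => Subtype.ext (u.comm_d n)
              equiv := fun b n => Subtype.ext (u.equiv b n) }, ?_, ?_⟩
    · exact ext (MonoidHom.ext fun _ => rfl) (MonoidHom.ext fun _ => rfl)
    · intro v hv
      refine ext (MonoidHom.ext fun x => Subtype.ext ?_) (MonoidHom.ext fun x => Subtype.ext ?_)
      · exact congr_f1 hv x
      · exact congr_f2 hv x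

section SesFacts

variable {N T Q : XMod} {κ : XModHom N T} {α : XModHom T Q}

theorem ses_comparison (hse : ShortExact κ α) :
    ∃ (w : XModHom (kerXMod α) N) (v : XModHom N (kerXMod α)),
      comp κ w = kerIncl α ∧ comp (kerIncl α) v = κ ∧ comp w v = XModHom.id N := by
  obtain ⟨htriv, huniv⟩ := hse.1
  obtain ⟨htriv0, huniv0⟩ := kerIncl_isKernelOf α
  obtain ⟨w, hw, -⟩ := huniv (kerXMod α) (kerIncl α) htriv0
  obtain ⟨v, hv, -⟩ := huniv0 N κ htriv
  obtain ⟨z, -, hz⟩ := huniv N κ htriv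
  have h1 : comp κ (comp w v) = κ := by
    rw [← comp_assoc, hw, hv]
  have h2 : comp κ (XModHom.id N) = κ := comp_id κ
  exact ⟨w, v, hw, hv, (hz _ h1).trans (hz _ h2).symm⟩

theorem ses_exact1 (hse : ShortExact κ α) : ∀ t : T.M, α.f1 t = 1 → ∃ n, κ.f1 n = t := by
  obtain ⟨w, v, hw, -, -⟩ := ses_comparison hse
  intro t ht
  exact ⟨w.f1 ⟨t, ht⟩, congr_f1 hw ⟨t, ht⟩⟩

theorem ses_exact2 (hse : ShortExact κ α) : ∀ t : T.G, α.f2 t = 1 → ∃ n, κ.f2 n = t := by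
  obtain ⟨w, v, hw, -, -⟩ := ses_comparison hse
  intro t ht
  exact ⟨w.f2 ⟨t, ht⟩, congr_f2 hw ⟨t, ht⟩⟩

theorem ses_inj1 (hse : ShortExact κ α) : Function.Injective κ.f1 := by
  obtain ⟨w, v, -, hv, hwv⟩ := ses_comparison hse
  intro a b hab
  have h1 : (kerIncl α).f1 (v.f1 a) = (kerIncl α).f1 (v.f1 b) :=
    (congr_f1 hv a).trans (hab.trans (congr_f1 hv b).symm)
  have h2 : v.f1 a = v.f1 b := Subtype.ext h1
  calc a = w.f1 (v.f1 a) := (congr_f1 hwv a).symm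
    _ = w.f1 (v.f1 b) := by rw [h2]
    _ = b := congr_f1 hwv b

theorem ses_inj2 (hse : ShortExact κ α) : Function.Injective κ.f2 := by
  obtain ⟨w, v, -, hv, hwv⟩ := ses_comparison hse
  intro a b hab
  have h1 : (kerIncl α).f2 (v.f2 a) = (kerIncl α).f2 (v.f2 b) :=
    (congr_f2 hv a).trans (hab.trans (congr_f2 hv b).symm)
  have h2 : v.f2 a = v.f2 b := Subtype.ext h1
  calc a = w.f2 (v.f2 a) := (congr_f2 hwv a).symm
    _ = w.f2 (v.f2 b) := by rw [h2]
    _ = b := congr_f2 hwv b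

end SesFacts

/-- Transfer of short exactness along isomorphisms of sequences. -/
theorem ses_transfer {N T Q N' T' Q' : XMod} {κ : XModHom N T} {α : XModHom T Q}
    {κ' : XModHom N' T'} {α' : XModHom T' Q'}
    (n : XModHom N N') (t : XModHom T T') (q : XModHom Q Q')
    (hn : IsIso n) (ht : IsIso t) (hq : IsIso q)
    (hk : comp t κ = comp κ' n) (ha : comp q α = comp α' t)
    (hse : ShortExact κ α) : ShortExact κ' α' := by
  obtain ⟨ninv, hn1, hn2⟩ := hn
  obtain ⟨tinv, ht1, ht2⟩ := ht
  constructor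
  · constructor
    · have h1 : comp (comp α' κ') n = comp (triv N' Q') n := by
        calc comp (comp α' κ') n = comp α' (comp κ' n) := comp_assoc _ _ _
          _ = comp α' (comp t κ) := by rw [hk]
          _ = comp (comp α' t) κ := (comp_assoc _ _ _).symm
          _ = comp (comp q α) κ := by rw [ha]
          _ = comp q (comp α κ) := comp_assoc _ _ _
          _ = comp q (triv N Q) := by rw [hse.1.1]
          _ = triv N Q' := comp_triv q
          _ = comp (triv N' Q') n := (triv_comp n).symm
      have hns : Function.Surjective n.f1 := IsIso.surj1 ⟨ninv, hn1, hn2⟩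
      have hns2 : Function.Surjective n.f2 := IsIso.surj2 ⟨ninv, hn1, hn2⟩
      exact cancel_of_surj hns hns2 h1
    · intro X u hu
      have hu0 : comp α (comp tinv u) = triv X Q := by
        apply cancel_iso_left hq
        calc comp q (comp α (comp tinv u)) = comp (comp q α) (comp tinv u) :=
              (comp_assoc _ _ _).symm
          _ = comp (comp α' t) (comp tinv u) := by rw [ha]
          _ = comp α' (comp t (comp tinv u)) := comp_assoc _ _ _
          _ = comp α' (comp (comp t tinv) u) := by rw [comp_assoc]
          _ = comp α' u := by rw [ht2, id_comp]
          _ = triv X Q' := hu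
          _ = comp q (triv X Q) := (comp_triv q).symm
      obtain ⟨v, hv, hvu⟩ := hse.1.2 X (comp tinv u) hu0
      refine ⟨comp n v, ?_, ?_⟩
      · calc comp κ' (comp n v) = comp (comp κ' n) v := (comp_assoc _ _ _).symm
          _ = comp (comp t κ) v := by rw [hk]
          _ = comp t (comp κ v) := comp_assoc _ _ _
          _ = comp t (comp tinv u) := by rw [hv]
          _ = comp (comp t tinv) u := (comp_assoc _ _ _).symm
          _ = u := by rw [ht2, id_comp]
      · intro v2 hv2
        have hkv : comp κ (comp ninv v2) = comp tinv u := by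
          apply cancel_iso_left ⟨tinv, ht1, ht2⟩
          calc comp t (comp κ (comp ninv v2)) = comp (comp t κ) (comp ninv v2) :=
                (comp_assoc _ _ _).symm
            _ = comp (comp κ' n) (comp ninv v2) := by rw [hk]
            _ = comp κ' (comp (comp n ninv) v2) := by rw [comp_assoc, comp_assoc]
            _ = comp κ' v2 := by rw [hn2, id_comp]
            _ = u := hv2
            _ = comp (comp t tinv) u := by rw [ht2, id_comp]
            _ = comp t (comp tinv u) := comp_assoc _ _ _
        have := hvu (comp ninv v2) hkv
        calc v2 = comp (comp n ninv) v2 := by rw [hn2, id_comp]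
          _ = comp n (comp ninv v2) := comp_assoc _ _ _
          _ = comp n v := by rw [this]
  · constructor
    · intro y
      obtain ⟨z, hz⟩ := IsIso.surj1 hq y
      obtain ⟨w, hw⟩ := hse.2.1 z
      refine ⟨t.f1 w, ?_⟩
      have h1 : α'.f1 (t.f1 w) = (comp α' t).f1 w := rfl
      rw [h1, ← ha]
      show q.f1 (α.f1 w) = y
      rw [hw, hz]
    · intro y
      obtain ⟨z, hz⟩ := IsIso.surj2 hq y
      obtain ⟨w, hw⟩ := hse.2.2 z
      refine ⟨t.f2 w, ?_⟩
      have h1 : α'.f2 (t.f2 w) = (comp α' t).f2 w := rfl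
      rw [h1, ← ha]
      show q.f2 (α.f2 w) = y
      rw [hw, hz]

/-- If a componentwise surjective morphism is orthogonal to all local objects,
then `L` inverts it. -/
theorem isIso_map_of_orth (L : LocalizationFunctor) (hL : L.RegEpiLoc) {A B : XMod}
    (f : XModHom A B) (hf1 : Function.Surjective f.f1) (hf2 : Function.Surjective f.f2)
    (hfac : ∀ (X : XMod), L.IsLocal X → ∀ φ : XModHom A X, ∃ ψ, comp ψ f = φ) :
    IsIso (L.map f) := by
  obtain ⟨d, hd⟩ := hfac (L.obj A) (L.iso_ell_obj A) (L.ell A)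
  obtain ⟨σ, hσ1, hσ2⟩ := L.iso_map_ell A
  refine ⟨comp σ (L.map d), ?_, ?_⟩
  · calc comp (comp σ (L.map d)) (L.map f) = comp σ (comp (L.map d) (L.map f)) :=
        comp_assoc _ _ _
      _ = comp σ (L.map (comp d f)) := by rw [L.map_comp]
      _ = comp σ (L.map (L.ell A)) := by rw [hd]
      _ = XModHom.id (L.obj A) := hσ1
  · have hleft : comp (comp σ (L.map d)) (L.map f) = XModHom.id (L.obj A) := by
      calc comp (comp σ (L.map d)) (L.map f) = comp σ (comp (L.map d) (L.map f)) :=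
          comp_assoc _ _ _
        _ = comp σ (L.map (comp d f)) := by rw [L.map_comp]
        _ = comp σ (L.map (L.ell A)) := by rw [hd]
        _ = XModHom.id (L.obj A) := hσ1
    set h := comp (L.map f) (comp σ (L.map d)) with hh
    have step1 : comp h (L.ell B) = L.ell B := by
      apply cancel_of_surj hf1 hf2
      calc comp (comp h (L.ell B)) f = comp h (comp (L.ell B) f) := comp_assoc _ _ _
        _ = comp h (comp (L.map f) (L.ell A)) := by rw [L.natural f]
        _ = comp (comp h (L.map f)) (L.ell A) := (comp_assoc _ _ _).symm
        _ = comp (L.map f) (L.ell A) := by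
            have hst : comp h (L.map f) = L.map f := by
              rw [hh, comp_assoc, hleft, comp_id]
            rw [hst]
        _ = comp (L.ell B) f := (L.natural f).symm
    have := cancel_of_surj (hL B).1 (hL B).2
      (step1.trans (id_comp (L.ell B)).symm)
    exact this

end Statement5Aux


section CompareDef

open XModHom

/-- The comparison morphism from `T ×_Q Q'` to `LT ×_{LQ} Q'`. -/
def pbCompare (L : LocalizationFunctor) {T Q Q' : XMod} (α : XModHom T Q) (g : XModHom Q' Q) :
    XModHom (pbXMod α g) (pbXMod (L.map α) (XModHom.comp (L.ell Q) g)) where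
  f1 :=
    { toFun := fun w => ⟨((L.ell T).f1 w.1.1, w.1.2), by
        show (L.map α).f1 ((L.ell T).f1 w.1.1) = (L.ell Q).f1 (g.f1 w.1.2)
        have h2 : (L.ell Q).f1 (α.f1 w.1.1) = (L.map α).f1 ((L.ell T).f1 w.1.1) :=
          congr_f1 (L.natural α) w.1.1
        have hw : α.f1 w.1.1 = g.f1 w.1.2 := w.2
        rw [← h2, hw]⟩
      map_one' := Subtype.ext (Prod.ext (map_one (L.ell T).f1) rfl)
      map_mul' := fun a b => Subtype.ext (Prod.ext (map_mul (L.ell T).f1 _ _) rfl) }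
  f2 :=
    { toFun := fun w => ⟨((L.ell T).f2 w.1.1, w.1.2), by
        show (L.map α).f2 ((L.ell T).f2 w.1.1) = (L.ell Q).f2 (g.f2 w.1.2)
        have h2 : (L.ell Q).f2 (α.f2 w.1.1) = (L.map α).f2 ((L.ell T).f2 w.1.1) :=
          congr_f2 (L.natural α) w.1.1
        have hw : α.f2 w.1.1 = g.f2 w.1.2 := w.2
        rw [← h2, hw]⟩
      map_one' := Subtype.ext (Prod.ext (map_one (L.ell T).f2) rfl)
      map_mul' := fun a b => Subtype.ext (Prod.ext (map_mul (L.ell T).f2 _ _) rfl) }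
  comm_d := fun w => Subtype.ext (Prod.ext ((L.ell T).comm_d w.1.1) rfl)
  equiv := fun b w => Subtype.ext (Prod.ext ((L.ell T).equiv b.1.1 w.1.1) rfl)

end CompareDef

/-- A regular-epi localization functor `L` is conditionally
flat if and only if for every `L`-flat short exact sequence whose kernel `N` is
`L`-local, the pullback sequence along any morphism `Q' → Q` is `L`-flat. -/
theorem conditionallyFlat_iff_local_kernel (L : LocalizationFunctor)
    (hL : L.RegEpiLoc) :
    L.ConditionallyFlat ↔
      ∀ (N T Q : XMod) (κ : XModHom N T) (α : XModHom T Q)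
        (hse : ShortExact κ α), L.LFlat κ α → L.IsLocal N →
          ∀ (Q' : XMod) (g : XModHom Q' Q),
            L.LFlat (pbIn κ α g hse.1.1) (pbSnd α g) := by
  open XModHom in
  constructor
  · intro h N T Q κ α hse hf _ Q' g
    exact h N T Q κ α hse hf Q' g
  · intro H N T Q κ α hse hflat Q' g
    set g' := XModHom.comp (L.ell Q) g with hg'def
    have hflat2 : L.LFlat (L.map κ) (L.map α) :=
      ses_transfer (L.ell (L.obj N)) (L.ell (L.obj T)) (L.ell (L.obj Q))
        (L.iso_ell_obj N) (L.iso_ell_obj T) (L.iso_ell_obj Q)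
        (L.natural (L.map κ)) (L.natural (L.map α)) hflat
    have hpp := H (L.obj N) (L.obj T) (L.obj Q) (L.map κ) (L.map α) hflat hflat2
      (L.iso_ell_obj N) Q' g'
    set e := pbCompare L α g with hedef
    -- pointwise facts
    have hκα1 : ∀ n, α.f1 (κ.f1 n) = 1 := fun n => congr_f1 hse.1.1 n
    have hκα2 : ∀ n, α.f2 (κ.f2 n) = 1 := fun n => congr_f2 hse.1.1 n
    have hnatT1 : ∀ t, (L.ell Q).f1 (α.f1 t) = (L.map α).f1 ((L.ell T).f1 t) :=
      fun t => congr_f1 (L.natural α) t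
    have hnatT2 : ∀ t, (L.ell Q).f2 (α.f2 t) = (L.map α).f2 ((L.ell T).f2 t) :=
      fun t => congr_f2 (L.natural α) t
    have hnatK1 : ∀ n, (L.ell T).f1 (κ.f1 n) = (L.map κ).f1 ((L.ell N).f1 n) :=
      fun n => congr_f1 (L.natural κ) n
    have hnatK2 : ∀ n, (L.ell T).f2 (κ.f2 n) = (L.map κ).f2 ((L.ell N).f2 n) :=
      fun n => congr_f2 (L.natural κ) n
    have hinj1 : Function.Injective (L.map κ).f1 := ses_inj1 hflat
    have hinj2 : Function.Injective (L.map κ).f2 := ses_inj2 hflat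
    have hex1 := ses_exact1 hflat
    have hex2 := ses_exact2 hflat
    have hoex1 := ses_exact1 hse
    have hoex2 := ses_exact2 hse
    -- surjectivity of the comparison morphism
    have hes1 : Function.Surjective e.f1 := by
      rintro ⟨⟨y, m⟩, hx⟩
      have hx' : (L.map α).f1 y = (L.ell Q).f1 (g.f1 m) := hx
      obtain ⟨t0, ht0⟩ := (hL T).1 y
      have h1 : (L.ell Q).f1 (α.f1 t0 * (g.f1 m)⁻¹) = 1 := by
        have hst : (L.ell Q).f1 (α.f1 t0) = (L.ell Q).f1 (g.f1 m) := by
          rw [hnatT1 t0, ht0, hx']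
        rw [map_mul, map_inv, hst, mul_inv_cancel]
      obtain ⟨s, hs⟩ := hse.2.1 (α.f1 t0 * (g.f1 m)⁻¹)
      have h2 : (L.map α).f1 ((L.ell T).f1 s) = 1 := by
        rw [← hnatT1 s, hs, h1]
      obtain ⟨z, hz⟩ := hex1 _ h2
      obtain ⟨n, hn⟩ := (hL N).1 z
      have h3 : (L.ell T).f1 (κ.f1 n) = (L.ell T).f1 s := by
        rw [hnatK1 n, hn, hz]
      refine ⟨⟨(κ.f1 n * s⁻¹ * t0, m), ?_⟩, ?_⟩
      · show α.f1 (κ.f1 n * s⁻¹ * t0) = g.f1 m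
        rw [map_mul, map_mul, map_inv, hκα1 n, hs]
        group
      · apply Subtype.ext
        apply Prod.ext
        · show (L.ell T).f1 (κ.f1 n * s⁻¹ * t0) = y
          rw [map_mul, map_mul, map_inv, h3, ht0, mul_inv_cancel, one_mul]
        · rfl
    have hes2 : Function.Surjective e.f2 := by
      rintro ⟨⟨y, m⟩, hx⟩
      have hx' : (L.map α).f2 y = (L.ell Q).f2 (g.f2 m) := hx
      obtain ⟨t0, ht0⟩ := (hL T).2 y
      have h1 : (L.ell Q).f2 (α.f2 t0 * (g.f2 m)⁻¹) = 1 := by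
        have hst : (L.ell Q).f2 (α.f2 t0) = (L.ell Q).f2 (g.f2 m) := by
          rw [hnatT2 t0, ht0, hx']
        rw [map_mul, map_inv, hst, mul_inv_cancel]
      obtain ⟨s, hs⟩ := hse.2.2 (α.f2 t0 * (g.f2 m)⁻¹)
      have h2 : (L.map α).f2 ((L.ell T).f2 s) = 1 := by
        rw [← hnatT2 s, hs, h1]
      obtain ⟨z, hz⟩ := hex2 _ h2
      obtain ⟨n, hn⟩ := (hL N).2 z
      have h3 : (L.ell T).f2 (κ.f2 n) = (L.ell T).f2 s := by
        rw [hnatK2 n, hn, hz]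
      refine ⟨⟨(κ.f2 n * s⁻¹ * t0, m), ?_⟩, ?_⟩
      · show α.f2 (κ.f2 n * s⁻¹ * t0) = g.f2 m
        rw [map_mul, map_mul, map_inv, hκα2 n, hs]
        group
      · apply Subtype.ext
        apply Prod.ext
        · show (L.ell T).f2 (κ.f2 n * s⁻¹ * t0) = y
          rw [map_mul, map_mul, map_inv, h3, ht0, mul_inv_cancel, one_mul]
        · rfl
    -- orthogonality of the comparison morphism with respect to local objects
    have hfac : ∀ (X : XMod), L.IsLocal X → ∀ φ : XModHom (pbXMod α g) X,
        ∃ ψ, XModHom.comp ψ e = φ := by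
      intro X hX φ
      obtain ⟨xinv, hx1, hx2⟩ := hX
      set κ' := pbIn κ α g hse.1.1 with hκ'def
      set ψN := XModHom.comp xinv (L.map (XModHom.comp φ κ')) with hψNdef
      have hψ : XModHom.comp ψN (L.ell N) = XModHom.comp φ κ' := by
        calc XModHom.comp ψN (L.ell N)
            = XModHom.comp xinv (XModHom.comp (L.map (XModHom.comp φ κ')) (L.ell N)) :=
              comp_assoc _ _ _
          _ = XModHom.comp xinv (XModHom.comp (L.ell X) (XModHom.comp φ κ')) := by
              rw [← L.natural]
          _ = XModHom.comp (XModHom.comp xinv (L.ell X)) (XModHom.comp φ κ') :=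
              (comp_assoc _ _ _).symm
          _ = XModHom.comp φ κ' := by rw [hx1, id_comp]
      have hker1 : ∀ a : (pbXMod α g).M, e.f1 a = 1 → φ.f1 a = 1 := by
        intro a ha
        have hval : ((L.ell T).f1 a.1.1, a.1.2) = ((1 : (L.obj T).M), (1 : Q'.M)) :=
          congrArg Subtype.val ha
        have h1 : (L.ell T).f1 a.1.1 = 1 := congrArg Prod.fst hval
        have h2 : a.1.2 = 1 := congrArg Prod.snd hval
        have hmem : α.f1 a.1.1 = g.f1 a.1.2 := a.2
        rw [h2, map_one] at hmem
        obtain ⟨n, hn⟩ := hoex1 _ hmem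
        have h4 : (L.ell N).f1 n = 1 := by
          apply hinj1
          rw [map_one, ← hnatK1 n, hn]
          exact h1
        have h5 : a = κ'.f1 n := Subtype.ext (Prod.ext hn.symm h2)
        have hcc : φ.f1 (κ'.f1 n) = ψN.f1 ((L.ell N).f1 n) := (congr_f1 hψ n).symm
        rw [h5, hcc, h4, map_one]
      have hker2 : ∀ a : (pbXMod α g).G, e.f2 a = 1 → φ.f2 a = 1 := by
        intro a ha
        have hval : ((L.ell T).f2 a.1.1, a.1.2) = ((1 : (L.obj T).G), (1 : Q'.G)) :=
          congrArg Subtype.val ha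
        have h1 : (L.ell T).f2 a.1.1 = 1 := congrArg Prod.fst hval
        have h2 : a.1.2 = 1 := congrArg Prod.snd hval
        have hmem : α.f2 a.1.1 = g.f2 a.1.2 := a.2
        rw [h2, map_one] at hmem
        obtain ⟨n, hn⟩ := hoex2 _ hmem
        have h4 : (L.ell N).f2 n = 1 := by
          apply hinj2
          rw [map_one, ← hnatK2 n, hn]
          exact h1
        have h5 : a = κ'.f2 n := Subtype.ext (Prod.ext hn.symm h2)
        have hcc : φ.f2 (κ'.f2 n) = ψN.f2 ((L.ell N).f2 n) := (congr_f2 hψ n).symm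
        rw [h5, hcc, h4, map_one]
      have hcg1 : ∀ a b, e.f1 a = e.f1 b → φ.f1 a = φ.f1 b := by
        intro a b hab
        have h := hker1 (a * b⁻¹) (by rw [map_mul, map_inv, hab, mul_inv_cancel])
        rw [map_mul, map_inv] at h
        exact mul_inv_eq_one.mp h
      have hcg2 : ∀ a b, e.f2 a = e.f2 b → φ.f2 a = φ.f2 b := by
        intro a b hab
        have h := hker2 (a * b⁻¹) (by rw [map_mul, map_inv, hab, mul_inv_cancel])
        rw [map_mul, map_inv] at h
        exact mul_inv_eq_one.mp h
      let s1 := Function.surjInv hes1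
      let s2 := Function.surjInv hes2
      have hs1 : ∀ x, e.f1 (s1 x) = x := fun x => Function.surjInv_eq hes1 x
      have hs2 : ∀ x, e.f2 (s2 x) = x := fun x => Function.surjInv_eq hes2 x
      refine ⟨{ f1 := { toFun := fun x => φ.f1 (s1 x)
                        map_one' := by
                          show φ.f1 (s1 1) = 1
                          have h := hcg1 (s1 1) 1 (by rw [hs1, map_one])
                          rw [h, map_one]
                        map_mul' := by
                          intro x y
                          show φ.f1 (s1 (x * y)) = φ.f1 (s1 x) * φ.f1 (s1 y)
                          have h := hcg1 (s1 (x * y)) (s1 x * s1 y)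
                            (by rw [hs1, map_mul, hs1, hs1])
                          rw [h, map_mul] }
                f2 := { toFun := fun x => φ.f2 (s2 x)
                        map_one' := by
                          show φ.f2 (s2 1) = 1
                          have h := hcg2 (s2 1) 1 (by rw [hs2, map_one])
                          rw [h, map_one]
                        map_mul' := by
                          intro x y
                          show φ.f2 (s2 (x * y)) = φ.f2 (s2 x) * φ.f2 (s2 y)
                          have h := hcg2 (s2 (x * y)) (s2 x * s2 y)
                            (by rw [hs2, map_mul, hs2, hs2])
                          rw [h, map_mul] }
                comm_d := by
                  intro x
                  show X.d (φ.f1 (s1 x)) =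
                    φ.f2 (s2 ((pbXMod (L.map α) g').d x))
                  rw [φ.comm_d]
                  apply hcg2
                  rw [hs2, ← e.comm_d (s1 x), hs1]
                equiv := by
                  intro b x
                  show φ.f1 (s1 ((pbXMod (L.map α) g').act b x)) =
                    X.act (φ.f2 (s2 b)) (φ.f1 (s1 x))
                  rw [← φ.equiv]
                  apply hcg1
                  rw [hs1, e.equiv (s2 b) (s1 x), hs1, hs2] }, ?_⟩
      exact ext (MonoidHom.ext fun a => hcg1 _ _ (hs1 _))
        (MonoidHom.ext fun a => hcg2 _ _ (hs2 _))
    have hiso : IsIso (L.map e) := isIso_map_of_orth L hL e hes1 hes2 hfac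
    set j'' := pbIn (L.map κ) (L.map α) g' hflat.1.1 with hjdef
    set p'' := pbSnd (L.map α) g' with hpdef
    have E1 : XModHom.comp e (pbIn κ α g hse.1.1) = XModHom.comp j'' (L.ell N) := by
      refine ext (MonoidHom.ext fun n => Subtype.ext (Prod.ext ?_ rfl))
        (MonoidHom.ext fun n => Subtype.ext (Prod.ext ?_ rfl))
      · exact hnatK1 n
      · exact hnatK2 n
    have E2 : XModHom.comp p'' e = pbSnd α g :=
      ext (MonoidHom.ext fun _ => rfl) (MonoidHom.ext fun _ => rfl)
    obtain ⟨einv, he1, he2⟩ := hiso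
    obtain ⟨minv, hm1, hm2⟩ := L.iso_map_ell N
    have hk : XModHom.comp einv (L.map j'') =
        XModHom.comp (L.map (pbIn κ α g hse.1.1)) minv := by
      apply iso_shuffle he1 hm2
      rw [← L.map_comp, ← L.map_comp, E1]
    have ha : XModHom.comp (XModHom.id (L.obj Q')) (L.map p'') =
        XModHom.comp (L.map (pbSnd α g)) einv := by
      rw [id_comp]
      calc L.map p''
          = XModHom.comp (L.map p'') (XModHom.comp (L.map e) einv) := by
            rw [he2, comp_id]
        _ = XModHom.comp (XModHom.comp (L.map p'') (L.map e)) einv :=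
            (comp_assoc _ _ _).symm
        _ = XModHom.comp (L.map (XModHom.comp p'' e)) einv := by rw [L.map_comp]
        _ = XModHom.comp (L.map (pbSnd α g)) einv := by rw [E2]
    exact ses_transfer minv einv (XModHom.id (L.obj Q'))
      ⟨L.map (L.ell N), hm2, hm1⟩ ⟨L.map e, he2, he1⟩
      ⟨XModHom.id _, id_comp _, comp_id _⟩ hk ha hpp
end

section
/- There exists a regular-epi localization functor L on the category XMod of crossed modules of groups that is not admissible for the class of regular epimorphisms. -/
set_option linter.unusedVariables false

section SqLocalization

/-- The "verbal" subgroup of squares of kernel elements. -/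
def sqKer (X : XMod) : Subgroup X.M :=
  Subgroup.closure {x | ∃ t : X.M, X.d t = 1 ∧ x = t * t}

theorem act_mem_sqKer (X : XMod) (b : X.G) {x : X.M} (hx : x ∈ sqKer X) :
    X.act b x ∈ sqKer X := by
  have h : sqKer X ≤ Subgroup.comap (X.act b).toMonoidHom (sqKer X) := by
    refine (Subgroup.closure_le _).mpr ?_
    rintro y ⟨t, ht, rfl⟩
    have : X.act b (t * t) ∈ sqKer X := by
      rw [map_mul]
      exact Subgroup.subset_closure ⟨X.act b t, by rw [X.act_d, ht, mul_one, mul_inv_cancel], rfl⟩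
    simpa using this
  exact h hx

instance sqKer_normal (X : XMod) : (sqKer X).Normal := by
  constructor
  intro n hn g
  have := act_mem_sqKer X (X.d g) hn
  rwa [X.peiffer] at this

theorem sqKer_le_ker (X : XMod) : sqKer X ≤ X.d.ker := by
  refine (Subgroup.closure_le _).mpr ?_
  rintro y ⟨t, ht, rfl⟩
  show X.d (t * t) = 1
  rw [map_mul, ht, one_mul]

theorem sqKer_map_act (X : XMod) (b : X.G) :
    (sqKer X).map (X.act b).toMonoidHom = sqKer X := by
  apply le_antisymm
  · rintro y ⟨x, hx, rfl⟩
    exact act_mem_sqKer X b hx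
  · intro x hx
    exact ⟨X.act b⁻¹ x, act_mem_sqKer X b⁻¹ hx, X.act_act_inv b x⟩

/-- The localization functor on objects: quotient the top group by `sqKer`. -/
def Lobj (X : XMod) : XMod where
  M := X.M ⧸ sqKer X
  G := X.G
  act :=
    { toFun := fun b => QuotientGroup.congr (sqKer X) (sqKer X) (X.act b) (sqKer_map_act X b)
      map_one' := by
        apply MulEquiv.ext
        intro x
        refine QuotientGroup.induction_on x fun t => ?_
        show QuotientGroup.mk (X.act 1 t) = QuotientGroup.mk t
        rw [map_one]
        rfl
      map_mul' := by
        intro b c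
        apply MulEquiv.ext
        intro x
        refine QuotientGroup.induction_on x fun t => ?_
        show QuotientGroup.mk (X.act (b * c) t) = QuotientGroup.mk (X.act b (X.act c t))
        rw [map_mul]
        rfl }
  d := QuotientGroup.lift (sqKer X) X.d (sqKer_le_ker X)
  act_d := by
    intro b t
    refine QuotientGroup.induction_on t fun s => ?_
    show X.d (X.act b s) = b * X.d s * b⁻¹
    exact X.act_d b s
  peiffer := by
    intro t s
    refine QuotientGroup.induction_on t fun t' => ?_
    refine QuotientGroup.induction_on s fun s' => ?_
    show QuotientGroup.mk (X.act (X.d t') s') = QuotientGroup.mk (t' * s' * t'⁻¹)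
    rw [X.peiffer]

theorem sqKer_le_comap {A B : XMod} (f : XModHom A B) :
    sqKer A ≤ (sqKer B).comap f.f1 := by
  refine (Subgroup.closure_le _).mpr ?_
  rintro y ⟨t, ht, rfl⟩
  have : f.f1 (t * t) ∈ sqKer B := by
    rw [map_mul]
    exact Subgroup.subset_closure ⟨f.f1 t, by rw [f.comm_d, ht, map_one], rfl⟩
  simpa using this

/-- The localization functor on morphisms. -/
def Lmap {A B : XMod} (f : XModHom A B) : XModHom (Lobj A) (Lobj B) where
  f1 := QuotientGroup.map (sqKer A) (sqKer B) f.f1 (sqKer_le_comap f)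
  f2 := f.f2
  comm_d := by
    intro n
    refine QuotientGroup.induction_on n fun t => ?_
    show B.d (f.f1 t) = f.f2 (A.d t)
    exact f.comm_d t
  equiv := by
    intro b n
    refine QuotientGroup.induction_on n fun t => ?_
    exact congrArg (QuotientGroup.mk (s := sqKer B)) (f.equiv b t)

/-- The coaugmentation. -/
def Lell (X : XMod) : XModHom X (Lobj X) where
  f1 := QuotientGroup.mk' (sqKer X)
  f2 := MonoidHom.id X.G
  comm_d := fun _ => rfl
  equiv := fun _ _ => rfl

theorem sqKer_Lobj_eq_bot (X : XMod) : sqKer (Lobj X) = ⊥ := by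
  rw [eq_bot_iff]
  refine (Subgroup.closure_le _).mpr ?_
  rintro y ⟨t, ht, rfl⟩
  obtain ⟨s, rfl⟩ := QuotientGroup.mk_surjective t
  have hs : X.d s = 1 := ht
  have hmem : s * s ∈ sqKer X := Subgroup.subset_closure ⟨s, hs, rfl⟩
  show QuotientGroup.mk s * QuotientGroup.mk s ∈ (⊥ : Subgroup (Lobj X).M)
  rw [Subgroup.mem_bot]
  exact (QuotientGroup.eq_one_iff _).mpr hmem

/-- Inverse of the coaugmentation when `sqKer` is trivial. -/
def LellInv (X : XMod) (h : sqKer X = ⊥) : XModHom (Lobj X) X where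
  f1 := QuotientGroup.lift (sqKer X) (MonoidHom.id X.M)
    (by intro x hx; rw [h, Subgroup.mem_bot] at hx; simp [hx])
  f2 := MonoidHom.id X.G
  comm_d := by
    intro n
    refine QuotientGroup.induction_on n fun t => ?_
    rfl
  equiv := by
    intro b n
    refine QuotientGroup.induction_on n fun t => ?_
    rfl

theorem Lell_isIso (X : XMod) (h : sqKer X = ⊥) : XModHom.IsIso (Lell X) := by
  refine ⟨LellInv X h, ?_, ?_⟩
  · apply XModHom.ext
    · exact MonoidHom.ext fun a => rfl
    · rfl
  · apply XModHom.ext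
    · refine MonoidHom.ext fun a => ?_
      refine QuotientGroup.induction_on a fun t => ?_
      rfl
    · rfl

theorem Lmap_ell (X : XMod) : Lmap (Lell X) = Lell (Lobj X) := by
  apply XModHom.ext
  · refine MonoidHom.ext fun a => ?_
    refine QuotientGroup.induction_on a fun t => ?_
    rfl
  · rfl

/-- The localization functor. -/
def Lfun : LocalizationFunctor where
  obj := Lobj
  map := Lmap
  map_id := by
    intro A
    apply XModHom.ext
    · refine MonoidHom.ext fun a => ?_
      refine QuotientGroup.induction_on a fun t => ?_
      rfl
    · rfl
  map_comp := by
    intro A B C f g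
    apply XModHom.ext
    · refine MonoidHom.ext fun a => ?_
      refine QuotientGroup.induction_on a fun t => ?_
      rfl
    · rfl
  ell := Lell
  natural := by
    intro A B f
    apply XModHom.ext
    · exact MonoidHom.ext fun a => rfl
    · rfl
  iso_ell_obj := fun A => Lell_isIso (Lobj A) (sqKer_Lobj_eq_bot A)
  iso_map_ell := fun A => by
    show XModHom.IsIso (Lmap (Lell A))
    rw [Lmap_ell]
    exact Lell_isIso (Lobj A) (sqKer_Lobj_eq_bot A)

theorem Lfun_regEpiLoc : Lfun.RegEpiLoc := by
  intro X
  exact ⟨QuotientGroup.mk'_surjective _, Function.surjective_id⟩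

end SqLocalization

section Counterexample

theorem comp_eq_triv {A B C : XMod} (g : XModHom B C) (f : XModHom A B)
    (h1 : ∀ a, g.f1 (f.f1 a) = 1) (h2 : ∀ a, g.f2 (f.f2 a) = 1) :
    XModHom.comp g f = XModHom.triv A C := by
  apply XModHom.ext
  · exact MonoidHom.ext h1
  · exact MonoidHom.ext h2

theorem comp_triv {A B C : XMod} (g : XModHom B C) :
    XModHom.comp g (XModHom.triv A B) = XModHom.triv A C :=
  comp_eq_triv g _ (fun _ => map_one g.f1) (fun _ => map_one g.f2)

/-- A crossed module with trivial boundary and action. -/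
def trivXMod (M G : Type) [CommGroup M] [Group G] : XMod where
  M := M
  G := G
  act := 1
  d := 1
  act_d := by
    intro b t
    show (1 : G) = b * 1 * b⁻¹
    rw [mul_one, mul_inv_cancel]
  peiffer := by
    intro t s
    show s = t * s * t⁻¹
    rw [mul_comm t s, mul_inv_cancel_right]

abbrev C4 : Type := Multiplicative (ZMod 4)

/-- The crossed module `(C₄ = C₄)`. -/
def Tx : XMod where
  M := C4
  G := C4
  act := 1
  d := MonoidHom.id C4
  act_d := by
    intro b t
    show t = b * t * b⁻¹
    rw [mul_comm b t, mul_inv_cancel_right]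
  peiffer := by
    intro t s
    show s = t * s * t⁻¹
    rw [mul_comm t s, mul_inv_cancel_right]

/-- The crossed module `(C₄ → 1)`. -/
def Qx : XMod := trivXMod C4 PUnit

/-- The test object `(ℤ → 1)`. -/
def Wx : XMod := trivXMod (Multiplicative ℤ) PUnit

theorem sqKer_Tx_le : sqKer Tx ≤ (sqKer Qx).comap (MonoidHom.id C4) := by
  refine (Subgroup.closure_le _).mpr ?_
  rintro y ⟨t, ht, rfl⟩
  have h1 : t = 1 := ht
  rw [h1]
  show (1 : C4) * 1 ∈ (sqKer Qx).comap (MonoidHom.id C4)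
  exact Subgroup.mul_mem _ (Subgroup.one_mem _) (Subgroup.one_mem _)

/-- The regular epimorphism `α : L Tx → L Qx`. -/
def alphaX : XModHom (Lobj Tx) (Lobj Qx) where
  f1 := QuotientGroup.map (sqKer Tx) (sqKer Qx) (MonoidHom.id C4) sqKer_Tx_le
  f2 := 1
  comm_d := fun _ => rfl
  equiv := by
    intro b n
    refine QuotientGroup.induction_on n fun t => ?_
    rfl

theorem alphaX_regEpi : XModHom.RegEpi alphaX := by
  constructor
  · intro y
    refine QuotientGroup.induction_on y fun t => ?_
    exact ⟨QuotientGroup.mk t, rfl⟩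
  · intro y
    exact ⟨1, rfl⟩

/-- The generator `q` of `C₄` and its square. -/
def q1 : C4 := Multiplicative.ofAdd (1 : ZMod 4)

def q2 : C4 := Multiplicative.ofAdd (2 : ZMod 4)

theorem q2_mem_sqKer : q2 ∈ sqKer Qx :=
  Subgroup.subset_closure ⟨q1, rfl, rfl⟩

/-- The pullback of `α` along `ℓ^Qx`. -/
def Pbx : XMod := pbXMod alphaX (Lell Qx)

/-- The critical element of the pullback. -/
def pelt : ↥(pbM alphaX (Lell Qx)) :=
  ⟨((1 : (Lobj Tx).M), q2), by
    show alphaX.f1 1 = (Lell Qx).f1 q2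
    rw [map_one]
    exact ((QuotientGroup.eq_one_iff (N := sqKer Qx) q2).mpr q2_mem_sqKer).symm⟩

theorem Ksq_aux : ∀ t : C4, ((t * t) * (t * t)) = 1 := by decide

theorem sq_eq_one_of_mem_sqKer_Qx : ∀ n ∈ sqKer Qx, n * n = 1 := by
  have hK : sqKer Qx ≤ (powMonoidHom 2 : C4 →* C4).ker := by
    refine (Subgroup.closure_le _).mpr ?_
    rintro y ⟨t, ht, rfl⟩
    show ((t * t) ^ 2 : C4) = 1
    exact (pow_two ((t : C4) * (t : C4))).trans (Ksq_aux t)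
  intro n hn
  have h : n ^ 2 = 1 := hK hn
  rw [pow_two] at h
  exact h

theorem sqKer_Pbx_le_bot : sqKer Pbx ≤ ⊥ := by
  refine (Subgroup.closure_le _).mpr ?_
  rintro y ⟨t, ht, rfl⟩
  obtain ⟨⟨m, n⟩, hc⟩ := t
  have hval : ((Lobj Tx).d m, Qx.d n) = ((1 : (Lobj Tx).G), (1 : Qx.G)) :=
    congrArg Subtype.val ht
  have h1 : (Lobj Tx).d m = 1 := congrArg Prod.fst hval
  obtain ⟨a, rfl⟩ := QuotientGroup.mk_surjective m
  have ha : a = 1 := h1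
  subst ha
  have hc' : (Lell Qx).f1 n = 1 := by
    have : alphaX.f1 (QuotientGroup.mk (1 : C4)) = (Lell Qx).f1 n := hc
    rw [← this]
    exact map_one alphaX.f1
  have hn : n ∈ sqKer Qx := (QuotientGroup.eq_one_iff n).mp hc'
  have hnn : n * n = 1 := sq_eq_one_of_mem_sqKer_Qx n hn
  show _ ∈ (⊥ : Subgroup Pbx.M)
  rw [Subgroup.mem_bot]
  apply Subtype.ext
  refine Prod.ext ?_ ?_
  · exact mul_one (1 : (Lobj Tx).M)
  · exact hnn

/-- The critical element of `L(Pbx)`. -/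
def xelt : (Lobj Pbx).M := QuotientGroup.mk pelt

theorem xelt_ne_one : xelt ≠ 1 := by
  intro h
  haveI := sqKer_normal Pbx
  have hmem : pelt ∈ sqKer Pbx := (QuotientGroup.eq_one_iff (N := sqKer Pbx) pelt).mp h
  have : pelt = 1 := Subgroup.mem_bot.mp (sqKer_Pbx_le_bot hmem)
  have h2 : q2 = 1 := congrArg (fun p => p.val.2) this
  exact absurd h2 (by decide)

theorem xelt_d : (Lobj Pbx).d xelt = 1 := by
  show Pbx.d pelt = 1
  apply Subtype.ext
  show ((Lobj Tx).d 1, Qx.d q2) = ((1 : (Lobj Tx).G), (1 : Qx.G))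
  rw [map_one]
  rfl

/-- The nontrivial competing morphism `Wx → L Pbx`. -/
def w1 : XModHom Wx (Lobj Pbx) where
  f1 := zpowersHom _ xelt
  f2 := 1
  comm_d := by
    intro n
    rw [MonoidHom.one_apply]
    show (Lobj Pbx).d (xelt ^ Multiplicative.toAdd (show Multiplicative ℤ from n)) = 1
    rw [map_zpow, xelt_d, one_zpow]
  equiv := by
    intro b n
    rw [MonoidHom.one_apply, map_one, MulAut.one_apply]
    rfl

theorem w1_fst : XModHom.comp (Lmap (pbFst alphaX (Lell Qx))) w1
    = XModHom.triv Wx (Lobj (Lobj Tx)) := by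
  refine comp_eq_triv _ _ (fun a => ?_) (fun a => ?_)
  · show (Lmap (pbFst alphaX (Lell Qx))).f1 (w1.f1 a) = 1
    have hx : (Lmap (pbFst alphaX (Lell Qx))).f1 xelt = 1 := by
      show QuotientGroup.mk ((pbFst alphaX (Lell Qx)).f1 pelt) = 1
      rfl
    exact (map_zpow (Lmap (pbFst alphaX (Lell Qx))).f1 xelt ((Multiplicative.toAdd : Multiplicative ℤ ≃ ℤ) a)).trans ((congrArg (fun x => x ^ ((Multiplicative.toAdd : Multiplicative ℤ ≃ ℤ) a)) hx).trans (one_zpow _))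
  · show (Lmap (pbFst alphaX (Lell Qx))).f2 1 = 1
    exact map_one _

theorem w1_snd : XModHom.comp (Lmap (pbSnd alphaX (Lell Qx))) w1
    = XModHom.triv Wx (Lobj Qx) := by
  refine comp_eq_triv _ _ (fun a => ?_) (fun a => ?_)
  · show (Lmap (pbSnd alphaX (Lell Qx))).f1 (w1.f1 a) = 1
    have hx : (Lmap (pbSnd alphaX (Lell Qx))).f1 xelt = 1 := by
      show QuotientGroup.mk ((pbSnd alphaX (Lell Qx)).f1 pelt) = 1
      exact (QuotientGroup.eq_one_iff _).mpr q2_mem_sqKer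
    exact (map_zpow (Lmap (pbSnd alphaX (Lell Qx))).f1 xelt ((Multiplicative.toAdd : Multiplicative ℤ ≃ ℤ) a)).trans ((congrArg (fun x => x ^ ((Multiplicative.toAdd : Multiplicative ℤ ≃ ℤ) a)) hx).trans (one_zpow _))
  · show (Lmap (pbSnd alphaX (Lell Qx))).f2 1 = 1
    exact map_one _

end Counterexample

/-- There exists a regular-epi localization functor on `XMod`
that is not admissible for the class of regular epimorphisms. -/
theorem exists_regepi_localization_not_admissible :
    ∃ L : LocalizationFunctor, L.RegEpiLoc ∧ ¬ L.Admissible := by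
  refine ⟨Lfun, Lfun_regEpiLoc, ?_⟩
  intro hadm
  obtain ⟨hc, huniv⟩ := hadm Tx Qx alphaX alphaX_regEpi
  obtain ⟨w, hw, huniq⟩ := huniv Wx (XModHom.triv _ _) (XModHom.triv _ _)
    (by rw [comp_triv, comp_triv])
  have e1 : XModHom.triv Wx (Lobj Pbx) = w := huniq _ ⟨comp_triv _, comp_triv _⟩
  have e2 : w1 = w := huniq _ ⟨w1_fst, w1_snd⟩
  have e3 : XModHom.triv Wx (Lobj Pbx) = w1 := e1.trans e2.symm
  have e4 : (XModHom.triv Wx (Lobj Pbx)).f1 (Multiplicative.ofAdd (1 : ℤ))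
      = w1.f1 (Multiplicative.ofAdd (1 : ℤ)) := by rw [e3]
  have e5 : (1 : (Lobj Pbx).M) = xelt := by
    have := e4
    rwa [show w1.f1 (Multiplicative.ofAdd (1 : ℤ)) = xelt from zpow_one xelt ▸ rfl] at this
  exact xelt_ne_one e5.symm
end
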